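/- For all β₁, β₂, β₃ ∈ ℂ there exist α₁ ∈ ℂ, a₁ ∈ ℝ, α₂, α₃ ∈ ℂ with |α₂|² + |α₃|² = 1, and a real c ≥ 0, such that for all ξ ∈ ℂ: β₁ + β₂ξ + β₃ξ² + α₁ − a₁ξ − conj(α₁)ξ² = c·i·(α₂ξ + α₃)·(−conj(α₃)ξ + conj(α₂)). -/

import Mathlib

open Complex

private lemma key_coeff (β₁ β₂ β₃ α₁ α₂ α₃ : ℂ) (a₁ c : ℝ)
    (h1 : β₁ + α₁ = (c : ℂ) * Complex.I * α₃ * (starRingEnd ℂ) α₂)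
    (h2 : β₂ - (a₁ : ℂ) = (c : ℂ) * Complex.I *
        (α₂ * (starRingEnd ℂ) α₂ - α₃ * (starRingEnd ℂ) α₃))
    (h3 : β₃ - (starRingEnd ℂ) α₁ = -(c : ℂ) * Complex.I * α₂ * (starRingEnd ℂ) α₃) :
    ∀ ξ : ℂ,
        β₁ + β₂ * ξ + β₃ * ξ ^ 2 + α₁ - (a₁ : ℂ) * ξ - (starRingEnd ℂ) α₁ * ξ ^ 2 =
          (c : ℂ) * Complex.I * (α₂ * ξ + α₃) *
            (-(starRingEnd ℂ) α₃ * ξ + (starRingEnd ℂ) α₂) := by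
  intro ξ
  linear_combination h1 + ξ * h2 + ξ ^ 2 * h3

/-- Every quadratic holomorphic section `η = β₁ + β₂ξ + β₃ξ²` can be put into the
normal form `η = c i ξ`, `c ≥ 0`, by a Euclidean translation followed by a rotation. -/
theorem quadratic_section_normal_form (β₁ β₂ β₃ : ℂ) :
    ∃ (α₁ : ℂ) (a₁ : ℝ) (α₂ α₃ : ℂ) (c : ℝ),
      ‖α₂‖ ^ 2 + ‖α₃‖ ^ 2 = 1 ∧ 0 ≤ c ∧
      ∀ ξ : ℂ,
        β₁ + β₂ * ξ + β₃ * ξ ^ 2 + α₁ - (a₁ : ℂ) * ξ - (starRingEnd ℂ) α₁ * ξ ^ 2 =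
          (c : ℂ) * Complex.I * (α₂ * ξ + α₃) *
            (-(starRingEnd ℂ) α₃ * ξ + (starRingEnd ℂ) α₂) := by
  set s : ℝ := β₂.im with hs
  set w : ℂ := Complex.I * (β₃ + (starRingEnd ℂ) β₁) / 2 with hw
  set m : ℝ := ‖w‖ with hm
  set c : ℝ := Real.sqrt (s ^ 2 + 4 * m ^ 2) with hcdef
  have hm0 : 0 ≤ m := norm_nonneg w
  have hsum0 : 0 ≤ s ^ 2 + 4 * m ^ 2 := by positivity
  have hc0 : 0 ≤ c := Real.sqrt_nonneg _
  have hc2 : c ^ 2 = s ^ 2 + 4 * m ^ 2 := Real.sq_sqrt hsum0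
  have hcs : |s| ≤ c := by
    rw [hcdef, ← Real.sqrt_sq_eq_abs]
    exact Real.sqrt_le_sqrt (by nlinarith)
  have hβ₂ : (β₂ : ℂ) - ((β₂.re : ℝ) : ℂ) = (s : ℂ) * Complex.I := by
    rw [hs]; linear_combination -(Complex.re_add_im β₂)
  have hw' : β₃ + (starRingEnd ℂ) β₁ = -2 * Complex.I * w := by
    rw [hw]
    linear_combination (β₃ + (starRingEnd ℂ) β₁) * Complex.I_mul_I
  by_cases hA : c + s = 0
  · -- degenerate case : w = 0
    have hsc : s = -c := by linarith
    have hmz : m = 0 := by nlinarith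
    have hwz : w = 0 := by rwa [hm, norm_eq_zero] at hmz
    have hβ₃ : β₃ + (starRingEnd ℂ) β₁ = 0 := by rw [hw', hwz]; ring
    refine ⟨-β₁, β₂.re, 0, 1, c, by simp, hc0, ?_⟩
    apply key_coeff
    · simp
    · rw [hβ₂]
      simp only [map_one, map_zero]
      rw [hsc]
      push_cast
      ring
    · simp only [map_neg, map_one, map_zero, sub_neg_eq_add]
      rw [hβ₃]
      ring
  · -- main case
    have hA' : 0 < c + s := by
      rcases lt_or_ge 0 (c + s) with h | h
      · exact h
      · exfalso; apply hA
        have h2 : -c ≤ s := neg_le_of_abs_le hcs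
        linarith
    have hcpos : 0 < c := by
      have : s ≤ |s| := le_abs_self s
      linarith [hcs]
    set p : ℝ := (c + s) / (2 * c) with hp
    have hppos : 0 < p := by positivity
    have hcp : 2 * c * p = c + s := by rw [hp]; field_simp
    set r : ℝ := Real.sqrt p with hr
    have hrpos : 0 < r := Real.sqrt_pos.mpr hppos
    have hr2 : r ^ 2 = p := Real.sq_sqrt hppos.le
    have hm2 : 4 * m ^ 2 = c ^ 2 - s ^ 2 := by linarith [hc2]
    set α₂ : ℂ := ((r : ℝ) : ℂ) with hα₂
    set α₃ : ℂ := (starRingEnd ℂ) w / ((c * r : ℝ) : ℂ) with hα₃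
    set α₁ : ℂ := (c : ℂ) * Complex.I * α₃ * (starRingEnd ℂ) α₂ - β₁ with hα₁
    have hcr_ne : ((c * r : ℝ) : ℂ) ≠ 0 :=
      Complex.ofReal_ne_zero.mpr (by positivity)
    have hcC_ne : ((c : ℝ) : ℂ) ≠ 0 := Complex.ofReal_ne_zero.mpr hcpos.ne'
    have hrC_ne : ((r : ℝ) : ℂ) ≠ 0 := Complex.ofReal_ne_zero.mpr hrpos.ne'
    have hconjα₂ : (starRingEnd ℂ) α₂ = α₂ := by rw [hα₂, Complex.conj_ofReal]
    have habs3 : ‖α₃‖ ^ 2 = m ^ 2 / (c * r) ^ 2 := by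
      rw [hα₃, norm_div, Complex.norm_conj, Complex.norm_real, Real.norm_eq_abs, ← hm,
        abs_of_pos (by positivity : (0:ℝ) < c * r), div_pow]
    have habs3' : ‖α₃‖ ^ 2 = (c - s) / (2 * c) := by
      rw [habs3]
      rw [div_eq_div_iff (by positivity) (by positivity)]
      linear_combination (c / 2) * hm2 + (-(c - s) * c ^ 2) * hr2 + (-(c - s) * c / 2) * hcp
    have hq2 : α₂ * (starRingEnd ℂ) α₂ = ((p : ℝ) : ℂ) := by
      rw [hconjα₂, hα₂, ← hr2]
      push_cast
      ring
    have hq3 : α₃ * (starRingEnd ℂ) α₃ = (((c - s) / (2 * c) : ℝ) : ℂ) := by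
      rw [Complex.mul_conj, ← Complex.sq_norm, habs3']
    have hαprod : (c : ℂ) * (α₂ * (starRingEnd ℂ) α₃) = w := by
      rw [hα₃, map_div₀, Complex.conj_conj, Complex.conj_ofReal, hα₂]
      rw [show ((c * r : ℝ) : ℂ) = (c : ℂ) * (r : ℂ) by push_cast; ring]
      field_simp
    refine ⟨α₁, β₂.re, α₂, α₃, c, ?_, hc0, ?_⟩
    · rw [hα₂, Complex.norm_real, Real.norm_eq_abs, abs_of_pos hrpos, hr2, habs3']
      field_simp
      linarith [hcp]
    · apply key_coeff
      · rw [hα₁]; ring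
      · rw [hβ₂, hq2, hq3]
        have hre : (c : ℝ) * (p - (c - s) / (2 * c)) = s := by
          have h2c : (2 * c) ≠ 0 := by positivity
          rw [hp, ← sub_div, mul_div_assoc', div_eq_iff h2c]
          ring
        have hreC : ((c : ℝ) : ℂ) * (((p : ℝ) : ℂ) - (((c - s) / (2 * c) : ℝ) : ℂ)) = (s : ℂ) := by
          exact_mod_cast congrArg (fun x : ℝ => (x : ℂ)) hre
        linear_combination (-Complex.I) * hreC
      · rw [hα₁]
        simp only [map_sub, map_mul, Complex.conj_conj, Complex.conj_I, hconjα₂]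
        rw [Complex.conj_ofReal]
        linear_combination hw' + 2 * Complex.I * hαprod
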